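/- Let n ≥ 3 be an integer and let K ⊂ ℝ^{1+n} be compact. There exists a constant C > 0 such that for every continuous function f : ℝ^{1+n} → ℂ with support contained in K, ( ∫_{ℝ^n} ∫_{S^{n-1}} |Lf(y,θ)|² dθ dy )^{1/2} ≤ C ( ∫_{ℝ^{1+n}} |f|² )^{1/2}. -/

import Mathlib

open MeasureTheory Metric Set
open scoped ENNReal Real

lemma aux_CS {g : ℝ → ℂ} (hg : AEStronglyMeasurable g volume) {R : ℝ}
    (hz : ∀ s : ℝ, R < |s| → g s = 0) :
    (‖∫ s, g s‖₊ : ℝ≥0∞) ^ 2 ≤ ENNReal.ofReal (2 * R) * ∫⁻ s, (‖g s‖₊ : ℝ≥0∞) ^ 2 := by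
  have h22 : Real.HolderConjugate 2 2 := Real.HolderConjugate.two_two
  set ind : ℝ → ℝ≥0∞ := (Icc (-R) R).indicator (fun _ => 1) with hind
  have hid : ∀ s, (‖g s‖₊ : ℝ≥0∞) = (ind * fun s => (‖g s‖₊ : ℝ≥0∞)) s := by
    intro s
    by_cases hs : s ∈ Icc (-R) R
    · simp [hind, Set.indicator_of_mem hs]
    · have : R < |s| := by
        rw [Set.mem_Icc, not_and_or, not_le, not_le] at hs
        rcases hs with h | h
        · exact lt_abs.mpr (Or.inr (by linarith))
        · exact lt_abs.mpr (Or.inl h)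
      simp [hind, Set.indicator_of_notMem hs, hz s this]
  have h1 : (‖∫ s, g s‖₊ : ℝ≥0∞) ≤ ∫⁻ s, (‖g s‖₊ : ℝ≥0∞) :=
    enorm_integral_le_lintegral_enorm _
  have h2 : (∫⁻ s, (‖g s‖₊ : ℝ≥0∞)) ≤
      (∫⁻ s, ind s ^ (2 : ℝ)) ^ (1 / (2:ℝ)) * (∫⁻ s, ((‖g s‖₊:ℝ≥0∞)) ^ (2:ℝ)) ^ (1 / (2:ℝ)) := by
    calc (∫⁻ s, (‖g s‖₊ : ℝ≥0∞)) = ∫⁻ s, (ind * fun s => (‖g s‖₊ : ℝ≥0∞)) s := by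
          exact lintegral_congr hid
      _ ≤ _ := ENNReal.lintegral_mul_le_Lp_mul_Lq volume h22
          ((measurable_const.indicator measurableSet_Icc).aemeasurable)
          hg.aemeasurable.enorm
  have hindint : (∫⁻ s, ind s ^ (2:ℝ)) = ENNReal.ofReal (2 * R) := by
    have : ∀ s, ind s ^ (2:ℝ) = ind s := by
      intro s; by_cases hs : s ∈ Icc (-R) R <;>
        simp [hind, Set.indicator_of_mem, Set.indicator_of_notMem, hs, ENNReal.rpow_natCast]
    rw [lintegral_congr this, hind, lintegral_indicator_const measurableSet_Icc,
      one_mul, Real.volume_Icc]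
    ring_nf
  have hsq : ∀ x : ℝ≥0∞, (x ^ (1/(2:ℝ))) ^ 2 = x := by
    intro x
    rw [← ENNReal.rpow_natCast (x ^ (1/(2:ℝ))) 2, ← ENNReal.rpow_mul]
    norm_num
  calc (‖∫ s, g s‖₊ : ℝ≥0∞) ^ 2
      ≤ ((∫⁻ s, ind s ^ (2:ℝ)) ^ (1/(2:ℝ)) * (∫⁻ s, ((‖g s‖₊:ℝ≥0∞)) ^ (2:ℝ)) ^ (1/(2:ℝ))) ^ 2 :=
        pow_le_pow_left' (h1.trans h2) 2
    _ = (∫⁻ s, ind s ^ (2:ℝ)) * (∫⁻ s, ((‖g s‖₊:ℝ≥0∞)) ^ (2:ℝ)) := by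
        rw [mul_pow, hsq, hsq]
    _ = ENNReal.ofReal (2 * R) * ∫⁻ s, (‖g s‖₊ : ℝ≥0∞) ^ 2 := by
        rw [hindint]
        congr 1
        refine lintegral_congr fun s => ?_
        rw [← ENNReal.rpow_natCast]
        norm_num

/-- The light ray transform on Minkowski space `ℝ^{1+n}`. -/
noncomputable def lightRay {n : ℕ} (f : ℝ × EuclideanSpace ℝ (Fin n) → ℂ)
    (y : EuclideanSpace ℝ (Fin n)) (θ : sphere (0 : EuclideanSpace ℝ (Fin n)) 1) : ℂ :=
  ∫ s : ℝ, f (s, y + s • (θ : EuclideanSpace ℝ (Fin n)))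

/-- The standard surface measure on the unit sphere of `ℝ^n`. -/
noncomputable def sphereMeasure (n : ℕ) :
    Measure (sphere (0 : EuclideanSpace ℝ (Fin n)) 1) :=
  (volume : Measure (EuclideanSpace ℝ (Fin n))).toSphere

/-- Generalized version of the main estimate over an abstract finite-dimensional
normed space carrying an additive Haar measure. -/
lemma lightRay_aux {E : Type*} [NormedAddCommGroup E] [NormedSpace ℝ E]
    [MeasureSpace E] [BorelSpace E] [FiniteDimensional ℝ E]
    [SecondCountableTopology E]
    [(volume : Measure E).IsAddHaarMeasure]
    (K : Set (ℝ × E)) (hK : IsCompact K) :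
    ∃ C : ℝ, 0 < C ∧ ∀ f : ℝ × E → ℂ,
      Continuous f → Function.support f ⊆ K →
        Real.sqrt (∫ y : E, ∫ θ : sphere (0 : E) 1,
              ‖∫ s : ℝ, f (s, y + s • (θ : E))‖ ^ 2 ∂((volume : Measure E).toSphere))
          ≤ C * Real.sqrt (∫ p : ℝ × E, ‖f p‖ ^ 2) := by
  classical
  set σ : Measure (sphere (0 : E) 1) := (volume : Measure E).toSphere with hσdef
  obtain ⟨R, hR0, hKR⟩ := hK.isBounded.subset_closedBall_lt 0 0
  refine ⟨Real.sqrt (2 * R * (σ univ).toReal) + 1, by positivity, ?_⟩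
  intro f hf hsupp
  have hfz : ∀ p : ℝ × E, R < |p.1| → f p = 0 := by
    intro p hp
    by_contra h
    have h2 : ‖p‖ ≤ R := by simpa using hKR (hsupp (Function.mem_support.mpr h))
    have h3 : ‖p.1‖ ≤ ‖p‖ := norm_fst_le p
    rw [Real.norm_eq_abs] at h3
    linarith
  have hfK : ∀ p : ℝ × E, p ∉ K → f p = 0 := by
    intro p hp
    by_contra h
    exact hp (hsupp (Function.mem_support.mpr h))
  have hcs : HasCompactSupport f := HasCompactSupport.intro hK hfK
  obtain ⟨M, hM⟩ := hcs.exists_bound_of_continuous hf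
  have hM0 : 0 ≤ M := le_trans (norm_nonneg _) (hM (0, 0))
  set G : ℝ × E → ℝ≥0∞ := fun p => (‖f p‖₊ : ℝ≥0∞) ^ 2 with hGdef
  have hGm : Measurable G := hf.measurable.enorm.pow_const 2
  have hGbound : ∀ p, G p ≤ ENNReal.ofReal (M ^ 2) := by
    intro p
    have h1 : (‖f p‖₊ : ℝ≥0∞) ≤ ENNReal.ofReal M := by
      rw [← enorm_eq_nnnorm, ← ofReal_norm]
      exact ENNReal.ofReal_le_ofReal (hM p)
    calc G p ≤ (ENNReal.ofReal M) ^ 2 := pow_le_pow_left' h1 2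
      _ = ENNReal.ofReal (M ^ 2) := by rw [← ENNReal.ofReal_pow hM0]
  have hψ : Continuous fun q : (E × sphere (0 : E) 1) × ℝ =>
      ((q.2, q.1.1 + q.2 • (q.1.2 : E)) : ℝ × E) := by
    refine continuous_snd.prodMk ?_
    exact (continuous_fst.fst).add
      (continuous_snd.smul (continuous_subtype_val.comp continuous_fst.snd))
  have hΨ : Continuous fun q : (E × sphere (0 : E) 1) × ℝ =>
      f (q.2, q.1.1 + q.2 • (q.1.2 : E)) := hf.comp hψ
  have hLmeas : StronglyMeasurable fun x : E × sphere (0 : E) 1 =>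
      ∫ s : ℝ, f (s, x.1 + s • (x.2 : E)) :=
    StronglyMeasurable.integral_prod_right' (f := fun q : (E × sphere (0 : E) 1) × ℝ =>
      f (q.2, q.1.1 + q.2 • (q.1.2 : E))) hΨ.stronglyMeasurable
  have hLsq_meas : Measurable fun x : E × sphere (0 : E) 1 =>
      (‖∫ s : ℝ, f (s, x.1 + s • (x.2 : E))‖₊ : ℝ≥0∞) ^ 2 :=
    hLmeas.measurable.enorm.pow_const 2
  set H : E × sphere (0 : E) 1 → ℝ≥0∞ :=
    fun x => ∫⁻ s : ℝ, G (s, x.1 + s • (x.2 : E)) with hHdef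
  have hHmeas : Measurable H := by
    apply Measurable.lintegral_prod_right
      (f := fun (x : E × sphere (0 : E) 1) (s : ℝ) => G (s, x.1 + s • (x.2 : E)))
    exact (hGm.comp hψ.measurable)
  have hkey : ∀ (y : E) (θ : sphere (0 : E) 1),
      (‖∫ s : ℝ, f (s, y + s • (θ : E))‖₊ : ℝ≥0∞) ^ 2
        ≤ ENNReal.ofReal (2 * R) * H (y, θ) := by
    intro y θ
    have hgc : Continuous fun s : ℝ => f (s, y + s • (θ : E)) :=
      hf.comp (continuous_id.prodMk (continuous_const.add (continuous_id.smul continuous_const)))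
    exact aux_CS hgc.aestronglyMeasurable
      (fun s hs => hfz (s, y + s • (θ : E)) (by simpa using hs))
  have hHbound : ∀ x : E × sphere (0 : E) 1,
      H x ≤ ENNReal.ofReal (M ^ 2) * ENNReal.ofReal (2 * R) := by
    intro x
    have hb : ∀ s : ℝ, G (s, x.1 + s • (x.2 : E)) ≤
        (Icc (-R) R).indicator (fun _ => ENNReal.ofReal (M ^ 2)) s := by
      intro s
      by_cases hs : s ∈ Icc (-R) R
      · rw [Set.indicator_of_mem hs]; exact hGbound _
      · rw [Set.indicator_of_notMem hs]
        have hRs : R < |s| := by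
          rw [Set.mem_Icc, not_and_or, not_le, not_le] at hs
          rcases hs with h | h
          · exact lt_abs.mpr (Or.inr (by linarith))
          · exact lt_abs.mpr (Or.inl h)
        have h0 : f (s, x.1 + s • (x.2 : E)) = 0 := hfz _ (by simpa using hRs)
        simp [hGdef, h0]
    calc H x ≤ ∫⁻ s, (Icc (-R) R).indicator (fun _ => ENNReal.ofReal (M ^ 2)) s :=
          lintegral_mono hb
      _ = ENNReal.ofReal (M ^ 2) * ENNReal.ofReal (2 * R) := by
          rw [lintegral_indicator_const measurableSet_Icc, Real.volume_Icc]
          ring_nf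
  set B : ℝ≥0∞ := ∫⁻ p : ℝ × E, G p with hBdef
  have hBfin : B ≠ ∞ := by
    have hb : ∀ p : ℝ × E, G p ≤ (closedBall (0 : ℝ × E) R).indicator
        (fun _ => ENNReal.ofReal (M ^ 2)) p := by
      intro p
      by_cases hp : p ∈ closedBall (0 : ℝ × E) R
      · rw [Set.indicator_of_mem hp]; exact hGbound p
      · rw [Set.indicator_of_notMem hp]
        have h0 : f p = 0 := hfK p (fun h => hp (hKR h))
        simp [hGdef, h0]
    have hle : B ≤ ENNReal.ofReal (M ^ 2) * volume (closedBall (0 : ℝ × E) R) := by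
      calc B ≤ ∫⁻ p, (closedBall (0 : ℝ × E) R).indicator
            (fun _ => ENNReal.ofReal (M ^ 2)) p := lintegral_mono hb
        _ = _ := lintegral_indicator_const measurableSet_closedBall _
    exact ne_top_of_le_ne_top
      (ENNReal.mul_ne_top ENNReal.ofReal_ne_top measure_closedBall_lt_top.ne) hle
  set I : E → ℝ≥0∞ :=
    fun y => ∫⁻ θ : sphere (0 : E) 1,
      (‖∫ s : ℝ, f (s, y + s • (θ : E))‖₊ : ℝ≥0∞) ^ 2 ∂σ with hIdef
  have hIfin : ∀ y, I y ≠ ∞ := by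
    intro y
    have hle : I y ≤ ∫⁻ _θ : sphere (0 : E) 1, ENNReal.ofReal (2 * R) *
        (ENNReal.ofReal (M ^ 2) * ENNReal.ofReal (2 * R)) ∂σ := by
      refine lintegral_mono fun θ => ?_
      exact le_trans (hkey y θ) (mul_le_mul_right (hHbound (y, θ)) _)
    rw [lintegral_const] at hle
    exact ne_top_of_le_ne_top (by finiteness) hle
  have hImeas : Measurable I := by
    apply Measurable.lintegral_prod_right
      (f := fun (y : E) (θ : sphere (0 : E) 1) =>
        (‖∫ s : ℝ, f (s, y + s • (θ : E))‖₊ : ℝ≥0∞) ^ 2)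
    exact hLsq_meas
  set A : ℝ≥0∞ := ∫⁻ y : E, I y with hAdef
  have hmain : A ≤ ENNReal.ofReal (2 * R) * (σ univ * B) := by
    have step1 : A ≤ ∫⁻ y : E, ∫⁻ θ : sphere (0 : E) 1,
        ENNReal.ofReal (2 * R) * H (y, θ) ∂σ :=
      lintegral_mono fun y => lintegral_mono fun θ => hkey y θ
    have step2 : (∫⁻ y : E, ∫⁻ θ : sphere (0 : E) 1, ENNReal.ofReal (2 * R) * H (y, θ) ∂σ)
        = ENNReal.ofReal (2 * R) * ∫⁻ y : E, ∫⁻ θ : sphere (0 : E) 1, H (y, θ) ∂σ := by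
      rw [← lintegral_const_mul' _ _ ENNReal.ofReal_ne_top]
      refine lintegral_congr fun y => ?_
      rw [← lintegral_const_mul' _ _ ENNReal.ofReal_ne_top]
    have step3 : (∫⁻ y : E, ∫⁻ θ : sphere (0 : E) 1, H (y, θ) ∂σ)
        = ∫⁻ θ : sphere (0 : E) 1, (∫⁻ y : E, H (y, θ)) ∂σ :=
      lintegral_lintegral_swap (hHmeas.aemeasurable)
    have step4 : ∀ θ : sphere (0 : E) 1, (∫⁻ y : E, H (y, θ)) = B := by
      intro θ
      have swap2 : (∫⁻ y : E, ∫⁻ s : ℝ, G (s, y + s • (θ : E)))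
          = ∫⁻ s : ℝ, ∫⁻ y : E, G (s, y + s • (θ : E)) := by
        refine lintegral_lintegral_swap ?_
        have hc : Continuous fun q : E × ℝ => G (q.2, q.1 + q.2 • (θ : E)) := by
          have h1 : Continuous fun p : ℝ × E => (‖f p‖₊ : ℝ≥0∞) :=
            (ENNReal.continuous_coe.comp (continuous_nnnorm.comp hf))
          exact ((ENNReal.continuous_pow 2).comp h1).comp
            (continuous_snd.prodMk (continuous_fst.add (continuous_snd.smul continuous_const)))
        exact hc.measurable.aemeasurable
      have shift : ∀ s : ℝ, (∫⁻ y : E, G (s, y + s • (θ : E))) = ∫⁻ y : E, G (s, y) :=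
        fun s => lintegral_add_right_eq_self (fun y => G (s, y)) (s • (θ : E))
      calc (∫⁻ y : E, H (y, θ)) = ∫⁻ s : ℝ, ∫⁻ y : E, G (s, y + s • (θ : E)) := swap2
        _ = ∫⁻ s : ℝ, ∫⁻ y : E, G (s, y) := lintegral_congr shift
        _ = B := by
            rw [hBdef, Measure.volume_eq_prod, lintegral_prod _ hGm.aemeasurable]
    calc A ≤ ENNReal.ofReal (2 * R) * ∫⁻ y : E, ∫⁻ θ : sphere (0 : E) 1, H (y, θ) ∂σ :=
          step1.trans step2.le
      _ = ENNReal.ofReal (2 * R) * ∫⁻ θ : sphere (0 : E) 1, (∫⁻ y : E, H (y, θ)) ∂σ := by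
          rw [step3]
      _ = ENNReal.ofReal (2 * R) * ∫⁻ _θ : sphere (0 : E) 1, B ∂σ := by
          congr 1; exact lintegral_congr step4
      _ = ENNReal.ofReal (2 * R) * (σ univ * B) := by rw [lintegral_const, mul_comm B]
  have hinner : ∀ y : E, (∫ θ : sphere (0 : E) 1,
      ‖∫ s : ℝ, f (s, y + s • (θ : E))‖ ^ 2 ∂σ) = (I y).toReal := by
    intro y
    have hsm : AEStronglyMeasurable
        (fun θ : sphere (0 : E) 1 => ‖∫ s : ℝ, f (s, y + s • (θ : E))‖ ^ 2) σ := by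
      have sect : StronglyMeasurable fun θ : sphere (0 : E) 1 =>
          ∫ s : ℝ, f (s, y + s • (θ : E)) :=
        hLmeas.comp_measurable (measurable_const.prodMk measurable_id)
      exact ((continuous_norm.pow 2).comp_stronglyMeasurable sect).aestronglyMeasurable
    rw [integral_eq_lintegral_of_nonneg_ae (Filter.Eventually.of_forall fun θ => sq_nonneg _) hsm]
    congr 1
    refine lintegral_congr fun θ => ?_
    rw [ENNReal.ofReal_pow (norm_nonneg _), ofReal_norm, enorm_eq_nnnorm]
  have houter : (∫ y : E, ∫ θ : sphere (0 : E) 1,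
      ‖∫ s : ℝ, f (s, y + s • (θ : E))‖ ^ 2 ∂σ) = A.toReal := by
    have hsm : AEStronglyMeasurable (fun y : E => (I y).toReal) volume :=
      hImeas.ennreal_toReal.aestronglyMeasurable
    calc (∫ y : E, ∫ θ : sphere (0 : E) 1, ‖∫ s : ℝ, f (s, y + s • (θ : E))‖ ^ 2 ∂σ)
        = ∫ y : E, (I y).toReal := integral_congr_ae (Filter.Eventually.of_forall hinner)
      _ = A.toReal := by
          rw [integral_eq_lintegral_of_nonneg_ae
            (Filter.Eventually.of_forall fun y => ENNReal.toReal_nonneg) hsm]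
          congr 1
          exact lintegral_congr fun y => ENNReal.ofReal_toReal (hIfin y)
  have hRHS : (∫ p : ℝ × E, ‖f p‖ ^ 2) = B.toReal := by
    rw [integral_eq_lintegral_of_nonneg_ae (Filter.Eventually.of_forall fun p => sq_nonneg _)
      ((hf.norm.pow 2).aestronglyMeasurable)]
    congr 1
    refine lintegral_congr fun p => ?_
    rw [ENNReal.ofReal_pow (norm_nonneg _), ofReal_norm, enorm_eq_nnnorm]
  rw [houter, hRHS]
  have hfin : ENNReal.ofReal (2 * R) * (σ univ * B) ≠ ∞ := by
    refine ENNReal.mul_ne_top ENNReal.ofReal_ne_top (ENNReal.mul_ne_top ?_ hBfin)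
    exact (measure_lt_top σ univ).ne
  have h1 : A.toReal ≤ 2 * R * ((σ univ).toReal * B.toReal) := by
    have h2 := ENNReal.toReal_mono hfin hmain
    rwa [ENNReal.toReal_mul, ENNReal.toReal_mul,
      ENNReal.toReal_ofReal (by linarith : (0:ℝ) ≤ 2 * R)] at h2
  calc Real.sqrt A.toReal ≤ Real.sqrt (2 * R * (σ univ).toReal * B.toReal) := by
        apply Real.sqrt_le_sqrt; linarith [h1]
    _ = Real.sqrt (2 * R * (σ univ).toReal) * Real.sqrt B.toReal := by
        rw [Real.sqrt_mul (by positivity)]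
    _ ≤ (Real.sqrt (2 * R * (σ univ).toReal) + 1) * Real.sqrt B.toReal := by
        have h3 := Real.sqrt_nonneg B.toReal
        nlinarith [Real.sqrt_nonneg (2 * R * (σ univ).toReal)]

/-- `L²` boundedness of the light ray transform on continuous functions with support in a
fixed compact set `K ⊂ ℝ^{1+n}`, `n ≥ 3`. -/
theorem lightRay_L2_bound {n : ℕ} (hn : 3 ≤ n)
    (K : Set (ℝ × EuclideanSpace ℝ (Fin n))) (hK : IsCompact K) :
    ∃ C : ℝ, 0 < C ∧ ∀ f : ℝ × EuclideanSpace ℝ (Fin n) → ℂ,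
      Continuous f → Function.support f ⊆ K →
        Real.sqrt (∫ y : EuclideanSpace ℝ (Fin n),
            ∫ θ : sphere (0 : EuclideanSpace ℝ (Fin n)) 1,
              ‖lightRay f y θ‖ ^ 2 ∂(sphereMeasure n))
          ≤ C * Real.sqrt (∫ p : ℝ × EuclideanSpace ℝ (Fin n), ‖f p‖ ^ 2) := by
  obtain ⟨C, hC, h⟩ := lightRay_aux K hK
  exact ⟨C, hC, fun f hf hsupp => h f hf hsupp⟩
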